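/- Let ρ : G → ℤ_p^× be a continuous homomorphism from a profinite group G. For any integer d ≥ 1, there exists an open subgroup H ≤ G and a continuous homomorphism ρ_{1/d} : H → ℚ_p^× with ρ_{1/d}(σ)^d = ρ(σ) for all σ ∈ H. -/

import Mathlib

open Polynomial Finset

private lemma padicNormD_pos (p : ℕ) [Fact p.Prime] {d : ℕ} (hd : 1 ≤ d) :
    0 < ‖(d : ℤ_[p])‖ := by
  rw [norm_pos_iff]
  exact_mod_cast Nat.cast_ne_zero.mpr (by omega)

private lemma padic_mul_near_one {p : ℕ} [Fact p.Prime] {u w : ℤ_[p]} {t : ℝ}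
    (hu : ‖u - 1‖ < t) (hw : ‖w - 1‖ < t) : ‖u * w - 1‖ < t := by
  have h : u * w - 1 = u * (w - 1) + (u - 1) := by ring
  rw [h]
  refine lt_of_le_of_lt (PadicInt.nonarchimedean _ _) (max_lt ?_ hu)
  calc ‖u * (w - 1)‖ = ‖u‖ * ‖w - 1‖ := norm_mul _ _
    _ ≤ 1 * ‖w - 1‖ := by gcongr; exact PadicInt.norm_le_one u
    _ = ‖w - 1‖ := one_mul _
    _ < t := hw

private lemma padic_pow_near_one {p : ℕ} [Fact p.Prime] {u : ℤ_[p]} {t : ℝ}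
    (ht : 0 < t) (hu : ‖u - 1‖ < t) (n : ℕ) : ‖u ^ n - 1‖ < t := by
  induction n with
  | zero => simpa
  | succ n ih => rw [pow_succ]; exact padic_mul_near_one ih hu

private lemma padic_sum_norm_lt {p : ℕ} [Fact p.Prime] {n : ℕ} {t : ℝ}
    (ht : 0 < t) (f : ℕ → ℤ_[p]) (hf : ∀ i, ‖f i‖ < t) :
    ‖∑ i ∈ Finset.range n, f i‖ < t := by
  induction n with
  | zero => simpa
  | succ n ih =>
    rw [Finset.sum_range_succ]
    exact lt_of_le_of_lt (PadicInt.nonarchimedean _ _) (max_lt ih (hf n))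

private lemma padic_exists_unique_root {p : ℕ} [Fact p.Prime] {d : ℕ} (hd : 1 ≤ d)
    (c : ℤ_[p]) (hc : ‖c - 1‖ < ‖(d : ℤ_[p])‖ ^ 2) :
    ∃! z : ℤ_[p], z ^ d = c ∧ ‖z - 1‖ < ‖(d : ℤ_[p])‖ := by
  have key : ∀ z : ℤ_[p], (X ^ d - C c).eval z = z ^ d - c := by simp
  have hder : ((X ^ d - C c).derivative).eval 1 = (d : ℤ_[p]) := by
    simp [derivative_X_pow]
  have hn : ‖(X ^ d - C c).eval 1‖ < ‖((X ^ d - C c).derivative).eval 1‖ ^ 2 := by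
    rw [key, hder, one_pow, norm_sub_rev]; exact hc
  obtain ⟨z, hz0, hz1, -, huniq⟩ := hensels_lemma hn
  simp only [Polynomial.coe_aeval_eq_eval] at hz0 hz1 huniq
  rw [hder] at hz1 huniq
  refine ⟨z, ⟨by rw [← sub_eq_zero, ← key]; exact hz0, hz1⟩, ?_⟩
  rintro z' ⟨h1', h2'⟩
  exact huniq z' (by rw [key, h1', sub_self]) h2'

noncomputable def padicRoot (p d : ℕ) [Fact p.Prime] (c : ℤ_[p]) : ℤ_[p] :=
  if h : 1 ≤ d ∧ ‖c - 1‖ < ‖(d : ℤ_[p])‖ ^ 2 then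
    (padic_exists_unique_root h.1 c h.2).exists.choose
  else 1

private lemma padicRoot_spec {p : ℕ} [Fact p.Prime] {d : ℕ} (hd : 1 ≤ d) {c : ℤ_[p]}
    (hc : ‖c - 1‖ < ‖(d : ℤ_[p])‖ ^ 2) :
    (padicRoot p d c) ^ d = c ∧ ‖padicRoot p d c - 1‖ < ‖(d : ℤ_[p])‖ := by
  rw [padicRoot, dif_pos ⟨hd, hc⟩]
  exact (padic_exists_unique_root hd c hc).exists.choose_spec

private lemma padicRoot_unique {p : ℕ} [Fact p.Prime] {d : ℕ} (hd : 1 ≤ d) {c z : ℤ_[p]}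
    (hc : ‖c - 1‖ < ‖(d : ℤ_[p])‖ ^ 2) (h1 : z ^ d = c) (h2 : ‖z - 1‖ < ‖(d : ℤ_[p])‖) :
    z = padicRoot p d c :=
  (padic_exists_unique_root hd c hc).unique ⟨h1, h2⟩ (padicRoot_spec hd hc)

private lemma padicRoot_dist {p : ℕ} [Fact p.Prime] {d : ℕ} (hd : 1 ≤ d) {c c' : ℤ_[p]}
    (hc : ‖c - 1‖ < ‖(d : ℤ_[p])‖ ^ 2) (hc' : ‖c' - 1‖ < ‖(d : ℤ_[p])‖ ^ 2) :
    ‖padicRoot p d c - padicRoot p d c'‖ * ‖(d : ℤ_[p])‖ = ‖c - c'‖ := by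
  obtain ⟨hz, hzn⟩ := padicRoot_spec hd hc
  obtain ⟨hz', hzn'⟩ := padicRoot_spec hd hc'
  set z := padicRoot p d c
  set z' := padicRoot p d c'
  have ht : 0 < ‖(d : ℤ_[p])‖ := padicNormD_pos p hd
  set S : ℤ_[p] := ∑ i ∈ Finset.range d, z ^ i * z' ^ (d - 1 - i) with hS
  have hfac : S * (z - z') = c - c' := by rw [hS, geom_sum₂_mul, hz, hz']
  have hterm : ∀ i : ℕ, ‖z ^ i * z' ^ (d - 1 - i) - 1‖ < ‖(d : ℤ_[p])‖ := fun i =>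
    padic_mul_near_one (padic_pow_near_one ht hzn i) (padic_pow_near_one ht hzn' _)
  have hSd : ‖S - (d : ℤ_[p])‖ < ‖(d : ℤ_[p])‖ := by
    have h2 : S - (d : ℤ_[p]) =
        ∑ i ∈ Finset.range d, (z ^ i * z' ^ (d - 1 - i) - 1) := by
      rw [Finset.sum_sub_distrib, Finset.sum_const, Finset.card_range, hS]
      simp
    rw [h2]
    exact padic_sum_norm_lt ht _ hterm
  have hSnorm : ‖S‖ = ‖(d : ℤ_[p])‖ := by
    have h3 : S = (d : ℤ_[p]) + (S - (d : ℤ_[p])) := by ring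
    rw [h3, PadicInt.norm_add_eq_max_of_ne (ne_of_gt hSd)]
    exact max_eq_left hSd.le
  calc ‖z - z'‖ * ‖(d : ℤ_[p])‖ = ‖(d : ℤ_[p])‖ * ‖z - z'‖ := mul_comm _ _
    _ = ‖S‖ * ‖z - z'‖ := by rw [hSnorm]
    _ = ‖S * (z - z')‖ := (norm_mul _ _).symm
    _ = ‖c - c'‖ := by rw [hfac]

/-- Fractional Tate twists: let `ρ : G → ℤ_p^×` be a continuous homomorphism from a
profinite group `G`.  For any integer `d ≥ 1` there exist an open subgroup `H ≤ G` and a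
continuous homomorphism `ρ_{1/d} : H → ℚ_p^×` with `ρ_{1/d}(σ)^d = ρ(σ)` for all
`σ ∈ H`. -/
theorem exists_continuous_dth_root_of_character
    (p : ℕ) [Fact p.Prime]
    (G : Type*) [Group G] [TopologicalSpace G] [IsTopologicalGroup G]
    [CompactSpace G] [TotallyDisconnectedSpace G] [T2Space G]
    (ρ : G →* ℤ_[p]ˣ) (hρ : Continuous ρ) (d : ℕ) (hd : 1 ≤ d) :
    ∃ H : Subgroup G, IsOpen (H : Set G) ∧
      ∃ f : H →* ℚ_[p]ˣ, Continuous f ∧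
        ∀ σ : H,
          (f σ) ^ d =
            Units.map (PadicInt.Coe.ringHom : ℤ_[p] →+* ℚ_[p]).toMonoidHom
              (ρ (σ : G)) := by
  have hnd0 : 0 < ‖(d : ℤ_[p])‖ := padicNormD_pos p hd
  have hnd2 : (0:ℝ) < ‖(d : ℤ_[p])‖ ^ 2 := by positivity
  set H : Subgroup G :=
    { carrier := {g : G | ‖((ρ g : ℤ_[p])) - 1‖ < ‖(d : ℤ_[p])‖ ^ 2}
      one_mem' := by simpa using hnd2
      mul_mem' := fun {a b} ha hb => by
        simpa [Set.mem_setOf_eq, map_mul] using padic_mul_near_one ha hb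
      inv_mem' := fun {a} ha => by
        simp only [Set.mem_setOf_eq, map_inv] at ha ⊢
        have h1 : ((ρ a)⁻¹ : ℤ_[p]ˣ).val - 1 = ((ρ a)⁻¹ : ℤ_[p]ˣ).val * (1 - (ρ a).val) := by
          rw [mul_sub, mul_one, Units.inv_mul]
        rw [h1, norm_mul, PadicInt.norm_units, one_mul, norm_sub_rev]
        exact ha } with hHdef
  have hcontval : Continuous fun g : G => ((ρ g : ℤ_[p]ˣ) : ℤ_[p]) :=
    Units.continuous_val.comp hρ
  have hmem : ∀ σ : H, ‖((ρ (σ : G) : ℤ_[p])) - 1‖ < ‖(d : ℤ_[p])‖ ^ 2 := fun σ => σ.2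
  -- the monoid hom into ℚ_[p]
  have hrootmul : ∀ σ τ : H,
      padicRoot p d (ρ ((σ * τ : H) : G)) =
        padicRoot p d (ρ (σ : G)) * padicRoot p d (ρ (τ : G)) := by
    intro σ τ
    obtain ⟨h1, h2⟩ := padicRoot_spec (p := p) hd (hmem σ)
    obtain ⟨h1', h2'⟩ := padicRoot_spec (p := p) hd (hmem τ)
    refine (padicRoot_unique hd (hmem (σ * τ)) ?_ ?_).symm
    · rw [mul_pow, h1, h1']
      push_cast [map_mul]
      rfl
    · exact padic_mul_near_one h2 h2'
  set g : H →* ℚ_[p] :=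
    { toFun := fun σ => ((padicRoot p d (ρ (σ : G)) : ℤ_[p]) : ℚ_[p])
      map_one' := by
        show ((padicRoot p d (ρ ((1 : H) : G)) : ℤ_[p]) : ℚ_[p]) = 1
        have h1 : (1 : ℤ_[p]) = padicRoot p d (ρ ((1 : H) : G)) := by
          refine padicRoot_unique hd (hmem 1) ?_ ?_
          · simp
          · simpa using hnd0
        rw [← h1]
        norm_cast
      map_mul' := fun σ τ => by
        show ((padicRoot p d (ρ ((σ * τ : H) : G)) : ℤ_[p]) : ℚ_[p]) =
          ((padicRoot p d (ρ (σ : G)) : ℤ_[p]) : ℚ_[p]) * ((padicRoot p d (ρ (τ : G)) : ℤ_[p]) : ℚ_[p])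
        rw [hrootmul σ τ]
        push_cast
        ring } with hgdef
  refine ⟨H, ?_, g.toHomUnits, ?_, ?_⟩
  · have hset : (H : Set G) =
        (fun g : G => ((ρ g : ℤ_[p]ˣ) : ℤ_[p])) ⁻¹' Metric.ball 1 (‖(d : ℤ_[p])‖ ^ 2) := by
      ext x
      simp [hHdef, Metric.mem_ball, dist_eq_norm]
    rw [hset]
    exact Metric.isOpen_ball.preimage hcontval
  · -- continuity
    have hroot : ContinuousOn (padicRoot p d)
        {c : ℤ_[p] | ‖c - 1‖ < ‖(d : ℤ_[p])‖ ^ 2} := by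
      rw [Metric.continuousOn_iff]
      intro b hb ε hε
      refine ⟨ε * ‖(d : ℤ_[p])‖, by positivity, fun a ha hab => ?_⟩
      rw [dist_eq_norm] at hab ⊢
      have hkey := padicRoot_dist (p := p) hd ha hb
      have : ‖padicRoot p d a - padicRoot p d b‖ * ‖(d : ℤ_[p])‖ <
          ε * ‖(d : ℤ_[p])‖ := by rw [hkey]; exact hab
      exact lt_of_mul_lt_mul_right (by linarith) hnd0.le
    have h1 : Continuous fun σ : H => ((ρ (σ : G) : ℤ_[p])) :=
      hcontval.comp continuous_subtype_val
    have h2 : Continuous fun σ : H => padicRoot p d (ρ (σ : G)) :=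
      hroot.comp_continuous h1 hmem
    have hgc : Continuous g := by
      exact continuous_subtype_val.comp h2
    rw [Units.continuous_iff]
    constructor
    · exact hgc
    · have heq : (fun σ : H => ((g.toHomUnits σ)⁻¹ : ℚ_[p]ˣ).val) =
          fun σ : H => g (σ⁻¹) := by
        funext σ
        rw [← map_inv g.toHomUnits σ, MonoidHom.coe_toHomUnits]
      rw [heq]
      exact hgc.comp continuous_inv
  · intro σ
    ext
    obtain ⟨h1, -⟩ := padicRoot_spec (p := p) hd (hmem σ)
    push_cast
    simp only [Units.val_pow_eq_pow_val, MonoidHom.coe_toHomUnits, Units.coe_map,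
      RingHom.toMonoidHom_eq_coe, MonoidHom.coe_coe]
    show (((padicRoot p d (ρ (σ : G)) : ℤ_[p]) : ℚ_[p])) ^ d = _
    rw [← PadicInt.coe_pow, h1]
    rfl
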